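/- arXiv:1801.09118 — 8 statements merged into one kernel-verified Lean document; each statement's English description precedes it below -/
import Mathlib

section
/- Let γ ∈ (0,1). For every z ∈ ℂ with Re z ≤ 0, the denominator of the TR-BDF2 stability function does not vanish: γ(1−γ)z² + (γ²−2)z + 2(2−γ) ≠ 0. -/
/-- For `γ ∈ (0,1)` the denominator of the TR-BDF2 stability function does not
vanish in the closed left half-plane. -/
theorem trbdf2_denominator_ne_zero (γ : ℝ) (hγ : γ ∈ Set.Ioo (0 : ℝ) 1)
    (z : ℂ) (hz : z.re ≤ 0) :
    (γ : ℂ) * (1 - γ) * z ^ 2 + ((γ : ℂ) ^ 2 - 2) * z + 2 * (2 - γ) ≠ 0 := by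
  obtain ⟨hγ0, hγ1⟩ := hγ
  set x := z.re with hx
  set y := z.im with hy
  have ha : 0 < γ * (1 - γ) := mul_pos hγ0 (by linarith)
  have hb : γ ^ 2 - 2 < 0 := by nlinarith
  intro h
  have hre : γ * (1 - γ) * (x * x - y * y) + (γ ^ 2 - 2) * x + 2 * (2 - γ) = 0 := by
    have := congrArg Complex.re h
    simp [Complex.add_re, Complex.mul_re, Complex.mul_im, pow_two,
      Complex.sub_re, Complex.sub_im, Complex.ofReal_re, Complex.ofReal_im] at this
    linarith [this]
  have him : y * (2 * (γ * (1 - γ)) * x + (γ ^ 2 - 2)) = 0 := by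
    have := congrArg Complex.im h
    simp [Complex.add_im, Complex.mul_re, Complex.mul_im, pow_two,
      Complex.sub_re, Complex.sub_im, Complex.ofReal_re, Complex.ofReal_im] at this
    nlinarith [this]
  rcases mul_eq_zero.1 him with h0 | h0
  · rw [h0] at hre
    nlinarith [mul_nonneg (le_of_lt ha) (mul_self_nonneg x)]
  · nlinarith [mul_nonpos_of_nonneg_of_nonpos (by positivity : (0:ℝ) ≤ 2 * (γ*(1-γ))) hz]
end

section
/- Let γ = 2 − √2. For every z ∈ ℂ with Re z ≤ 0, one has |(1+(1−γ)²)z + 2(2−γ)| ≤ |γ(1−γ)z² + (γ²−2)z + 2(2−γ)|; equivalently, the TR-BDF2 stability function satisfies |R(z)| ≤ 1 on the closed left half-plane (A-stability of TR-BDF2 for γ = 2 − √2). -/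
set_option maxHeartbeats 1000000 in


/-- A-stability of TR-BDF2 for `γ = 2 − √2`: on the closed left half-plane the
modulus of the numerator of the stability function is bounded by the modulus of
the denominator, i.e. `|R(z)| ≤ 1`. -/
theorem trbdf2_A_stability (γ : ℝ) (hγ : γ = 2 - Real.sqrt 2)
    (z : ℂ) (hz : z.re ≤ 0) :
    ‖(1 + (1 - (γ : ℂ)) ^ 2) * z + 2 * (2 - (γ : ℂ))‖ ≤
      ‖(γ : ℂ) * (1 - (γ : ℂ)) * z ^ 2 + ((γ : ℂ) ^ 2 - 2) * z + 2 * (2 - (γ : ℂ))‖ := by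
  set s := Real.sqrt 2 with hs
  have hs2 : s ^ 2 = 2 := Real.sq_sqrt (by norm_num)
  have hs1 : (1 : ℝ) ≤ s := by
    nlinarith [Real.sqrt_nonneg 2]
  have hs32 : s ≤ 3 / 2 := by
    nlinarith [Real.sqrt_nonneg 2]
  set x := z.re with hx
  set y := z.im with hy
  rw [Complex.norm_def, Complex.norm_def]
  apply Real.sqrt_le_sqrt
  simp only [Complex.normSq_apply, Complex.add_re, Complex.add_im, Complex.mul_re,
    Complex.mul_im, Complex.sub_re, Complex.sub_im, Complex.one_re, Complex.one_im,
    Complex.ofReal_re, Complex.ofReal_im, pow_two, ← hx, ← hy]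
  norm_num
  subst hγ
  have key : (((2-s)*(s-1)*(x^2-y^2) + ((2-s)^2-2)*x + 2*s)^2 + (2*(2-s)*(s-1)*x*y + ((2-s)^2-2)*y)^2)
      - (((1+(s-1)^2)*x + 2*s)^2 + ((1+(s-1)^2)*y)^2) =
      (34-24*s)*(x^2+y^2)^2 + (80-56*s)*(-x)*(x^2+y^2) + (48-32*s)*x^2 - 16*x := by
    linear_combination (15*y^4 - 8*x - 36*x*y^2 + 24*x^2 + 30*x^2*y^2 - 36*x^3 + 15*x^4
      - 6*s*y^4 + 14*s*x*y^2 - 8*s*x^2 - 12*s*x^2*y^2 + 14*s*x^3 - 6*s*x^4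
      + s^2*y^4 - 2*s^2*x*y^2 + 2*s^2*x^2*y^2 - 2*s^2*x^3 + s^2*x^4) * hs2
  have h1 : (0:ℝ) ≤ (34-24*s)*(x^2+y^2)^2 :=
    mul_nonneg (by nlinarith) (by positivity)
  have h2 : (0:ℝ) ≤ (80-56*s)*(-x)*(x^2+y^2) :=
    mul_nonneg (mul_nonneg (by nlinarith) (by linarith)) (by positivity)
  have h3 : (0:ℝ) ≤ (48-32*s)*x^2 := mul_nonneg (by nlinarith) (sq_nonneg x)
  linarith [key, h1, h2, h3, neg_nonneg.mpr hz]
end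

section
/- Let γ = 2 − √2, so that 1+(1−γ)² = 4−2√2, γ(1−γ) = 3√2−4, γ²−2 = 4−4√2 and 2(2−γ) = 2√2. Then for every y ∈ ℝ, |(3√2−4)(iy)² + (4−4√2)(iy) + 2√2|² − |(4−2√2)(iy) + 2√2|² = (3√2−4)²·y⁴. In particular |R(iy)| ≤ 1 for all real y, with strict inequality for y ≠ 0. -/
open Complex

/-- For `γ = 2 − √2`, on the imaginary axis the squared modulus of the
denominator of the TR-BDF2 stability function exceeds that of the numerator by
exactly `(3√2−4)² y⁴`; in particular `|R(iy)| ≤ 1` for all real `y`, with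
strict inequality for `y ≠ 0`. -/
theorem trbdf2_imaginary_axis :
    (∀ y : ℝ,
      ‖(((3 * Real.sqrt 2 - 4 : ℝ) : ℂ) * (Complex.I * y) ^ 2
          + ((4 - 4 * Real.sqrt 2 : ℝ) : ℂ) * (Complex.I * y)
          + ((2 * Real.sqrt 2 : ℝ) : ℂ))‖ ^ 2
        - ‖(((4 - 2 * Real.sqrt 2 : ℝ) : ℂ) * (Complex.I * y)
          + ((2 * Real.sqrt 2 : ℝ) : ℂ))‖ ^ 2
        = (3 * Real.sqrt 2 - 4) ^ 2 * y ^ 4) ∧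
    (∀ y : ℝ,
      ‖((((4 - 2 * Real.sqrt 2 : ℝ) : ℂ) * (Complex.I * y)
            + ((2 * Real.sqrt 2 : ℝ) : ℂ)) /
          (((3 * Real.sqrt 2 - 4 : ℝ) : ℂ) * (Complex.I * y) ^ 2
            + ((4 - 4 * Real.sqrt 2 : ℝ) : ℂ) * (Complex.I * y)
            + ((2 * Real.sqrt 2 : ℝ) : ℂ)))‖ ≤ 1) ∧
    (∀ y : ℝ, y ≠ 0 →
      ‖((((4 - 2 * Real.sqrt 2 : ℝ) : ℂ) * (Complex.I * y)
            + ((2 * Real.sqrt 2 : ℝ) : ℂ)) /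
          (((3 * Real.sqrt 2 - 4 : ℝ) : ℂ) * (Complex.I * y) ^ 2
            + ((4 - 4 * Real.sqrt 2 : ℝ) : ℂ) * (Complex.I * y)
            + ((2 * Real.sqrt 2 : ℝ) : ℂ)))‖ < 1) := by
  have hs : Real.sqrt 2 ^ 2 = 2 := Real.sq_sqrt (by norm_num)
  have hs1 : (1:ℝ) < Real.sqrt 2 := by nlinarith [Real.sqrt_nonneg 2]
  set num : ℝ → ℂ := fun y => ((4 - 2 * Real.sqrt 2 : ℝ) : ℂ) * (Complex.I * y)
      + ((2 * Real.sqrt 2 : ℝ) : ℂ) with hnum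
  set den : ℝ → ℂ := fun y => ((3 * Real.sqrt 2 - 4 : ℝ) : ℂ) * (Complex.I * y) ^ 2
      + ((4 - 4 * Real.sqrt 2 : ℝ) : ℂ) * (Complex.I * y)
      + ((2 * Real.sqrt 2 : ℝ) : ℂ) with hden
  have key : ∀ y : ℝ, ‖den y‖ ^ 2 - ‖num y‖ ^ 2
      = (3 * Real.sqrt 2 - 4) ^ 2 * y ^ 4 := by
    intro y
    rw [Complex.sq_norm, Complex.sq_norm, Complex.normSq_apply, Complex.normSq_apply]
    simp [hnum, hden, Complex.add_re, Complex.add_im, Complex.mul_re, Complex.mul_im,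
      Complex.I_re, Complex.I_im, Complex.ofReal_re, Complex.ofReal_im, pow_two]
    ring_nf
  have hnumsq : ∀ y : ℝ, (8:ℝ) ≤ ‖num y‖ ^ 2 := by
    intro y
    rw [Complex.sq_norm, Complex.normSq_apply]
    simp [hnum, Complex.add_re, Complex.add_im, Complex.mul_re, Complex.mul_im,
      Complex.I_re, Complex.I_im, Complex.ofReal_re, Complex.ofReal_im]
    nlinarith [sq_nonneg ((4 - 2 * Real.sqrt 2) * y), sq_nonneg y]
  have hnumpos : ∀ y : ℝ, 0 < ‖num y‖ := by
    intro y
    nlinarith [hnumsq y, norm_nonneg (num y)]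
  have hdenpos : ∀ y : ℝ, 0 < ‖den y‖ := by
    intro y
    nlinarith [key y, hnumsq y, norm_nonneg (den y), sq_nonneg (y^2),
      sq_nonneg ((3 * Real.sqrt 2 - 4) * y ^ 2)]
  have hdenne : ∀ y : ℝ, den y ≠ 0 := by
    intro y h
    have := hdenpos y
    rw [h] at this
    simp at this
  refine ⟨key, ?_, ?_⟩
  · intro y
    rw [norm_div, div_le_one (hdenpos y)]
    nlinarith [key y, sq_nonneg ((3 * Real.sqrt 2 - 4) * y ^ 2),
      norm_nonneg (num y), norm_nonneg (den y)]
  · intro y hy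
    rw [norm_div, div_lt_one (hdenpos y)]
    have h342 : 0 < 3 * Real.sqrt 2 - 4 := by nlinarith [Real.sqrt_nonneg 2]
    have h4 : 0 < (3 * Real.sqrt 2 - 4) ^ 2 * y ^ 4 :=
      mul_pos (pow_pos h342 2) (by positivity)
    nlinarith [key y, norm_nonneg (num y), norm_nonneg (den y)]
end

section
/- Let γ = 2 − √2 and let R(z) = ((1+(1−γ)²)z + 2(2−γ)) / (γ(1−γ)z² + (γ²−2)z + 2(2−γ)). Then (R(z) − exp(z))/z² tends to 0 as z → 0 in ℂ \ {0}; that is, R(z) agrees with the exponential up to an error O(z³), expressing the second-order accuracy of the TR-BDF2 method. -/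
open Filter

lemma exp_taylor2_tendsto :
    Tendsto (fun z : ℂ => (Complex.exp z - (1 + z + z ^ 2 / 2)) / z ^ 2)
      (nhdsWithin 0 {0}ᶜ) (nhds 0) := by
  have key : ∀ z : ℂ, z ≠ 0 → ‖z‖ ≤ 1 →
      ‖(Complex.exp z - (1 + z + z ^ 2 / 2)) / z ^ 2‖ ≤ ‖z‖ := by
    intro z hz hz1
    have hb := Complex.exp_bound hz1 (n := 3) (by norm_num)
    have hsum : (∑ m ∈ Finset.range 3, z ^ m / m.factorial) = 1 + z + z ^ 2 / 2 := by
      simp [Finset.sum_range_succ, Nat.factorial]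
    rw [hsum] at hb
    norm_num [Nat.factorial] at hb
    have habs : ‖Complex.exp z - (1 + z + z ^ 2 / 2)‖ ≤ ‖z‖ ^ 3 := by
      have h3 : (0:ℝ) ≤ ‖z‖ ^ 3 := by positivity
      nlinarith [hb]
    rw [norm_div]
    rw [div_le_iff₀ (by simpa [norm_pow] using pow_pos (by simpa using (norm_pos_iff.mpr hz)) 2)]
    calc ‖Complex.exp z - (1 + z + z ^ 2 / 2)‖ ≤ ‖z‖ ^ 3 := habs
      _ = ‖z‖ * ‖z ^ 2‖ := by simp [norm_pow]; ring
  apply squeeze_zero_norm'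
  · filter_upwards [self_mem_nhdsWithin,
      nhdsWithin_le_nhds (Metric.closedBall_mem_nhds (0:ℂ) one_pos)] with z hz hz1
    exact key z hz (by simpa [Complex.dist_eq] using hz1)
  · have : Tendsto (fun z : ℂ => ‖z‖) (nhdsWithin 0 {0}ᶜ) (nhds ‖(0:ℂ)‖) :=
      (continuous_norm.tendsto 0).mono_left nhdsWithin_le_nhds
    simpa using this

/-- Second-order accuracy of TR-BDF2 on the linear test problem: for
`γ = 2 − √2`, the stability function satisfies `R(z) − e^z = o(z²)` as `z → 0`,
i.e. `(R(z) − exp z)/z²  → 0` as `z → 0`, `z ≠ 0`. -/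
theorem trbdf2_second_order (γ : ℝ) (hγ : γ = 2 - Real.sqrt 2) :
    Tendsto (fun z : ℂ =>
        (((1 + (1 - (γ : ℂ)) ^ 2) * z + 2 * (2 - (γ : ℂ))) /
            ((γ : ℂ) * (1 - (γ : ℂ)) * z ^ 2 + ((γ : ℂ) ^ 2 - 2) * z + 2 * (2 - (γ : ℂ)))
          - Complex.exp z) / z ^ 2)
      (nhdsWithin 0 {0}ᶜ) (nhds 0) := by
  set c : ℂ := (γ : ℂ) with hc
  have h2c : (2 : ℂ) - c ≠ 0 := by
    rw [hc, hγ]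
    push_cast
    rw [show (2:ℂ) - (2 - (Real.sqrt 2 : ℂ)) = (Real.sqrt 2 : ℂ) by ring]
    exact Complex.ofReal_ne_zero.mpr (by positivity)
  set D : ℂ → ℂ := fun z => c * (1 - c) * z ^ 2 + (c ^ 2 - 2) * z + 2 * (2 - c) with hD
  have hD0 : D 0 = 2 * (2 - c) := by simp [hD]
  have hD0ne : D 0 ≠ 0 := by rw [hD0]; exact mul_ne_zero two_ne_zero h2c
  have hDc : Tendsto D (nhdsWithin 0 {0}ᶜ) (nhds (D 0)) :=
    ((Continuous.tendsto (by continuity) 0)).mono_left nhdsWithin_le_nhds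
  have hDne : ∀ᶠ z in nhdsWithin (0:ℂ) {0}ᶜ, D z ≠ 0 :=
    hDc (isOpen_compl_singleton.mem_nhds hD0ne)
  set a : ℂ := -(c * (1 - c) + (c ^ 2 - 2) / 2) with ha
  set b : ℂ := -(c * (1 - c) / 2) with hb
  have hcongr : ∀ᶠ z in nhdsWithin (0:ℂ) {0}ᶜ,
      (((1 + (1 - c) ^ 2) * z + 2 * (2 - c)) / D z - Complex.exp z) / z ^ 2
      = (z * (a + b * z) - ((Complex.exp z - (1 + z + z ^ 2 / 2)) / z ^ 2) * D z) / D z := by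
    filter_upwards [hDne, self_mem_nhdsWithin] with z hDz hz
    have hz : z ≠ 0 := hz
    simp only [hD] at hDz ⊢
    rw [ha, hb]
    rw [eq_div_iff hDz, div_sub' hDz, div_div, div_mul_eq_mul_div, div_eq_iff (mul_ne_zero hDz (pow_ne_zero 2 hz))]
    field_simp
    ring
  refine Tendsto.congr' (Filter.EventuallyEq.symm hcongr) ?_
  have t1 : Tendsto (fun z : ℂ => z * (a + b * z)) (nhdsWithin 0 {0}ᶜ) (nhds 0) := by
    have : Tendsto (fun z : ℂ => z * (a + b * z)) (nhds 0) (nhds (0 * (a + b * 0))) :=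
      Continuous.tendsto (by continuity) 0
    simpa using this.mono_left nhdsWithin_le_nhds
  have t2 := (exp_taylor2_tendsto.mul hDc)
  have t3 := (t1.sub t2).div hDc hD0ne
  simpa [Pi.div_def] using t3
end

section
/- Let γ = 2 − √2, d = γ/2, w = √2/4, and let b*₁ = (1−w)/3, b*₂ = (3w+1)/3, b*₃ = d/3. Define Rγ(z) = (2+γz)/(2−γz), R(z) = ((1+(1−γ)²)z + 2(2−γ)) / (γ(1−γ)z² + (γ²−2)z + 2(2−γ)), and the stability function of the embedded method R*(z) = 1 + z·(b*₁ + b*₂·Rγ(z) + b*₃·R(z)). Then (R*(z) − exp(z))/z³ tends to 0 as z → 0 in ℂ \ {0}; that is, the embedded companion formula of TR-BDF2 is third-order accurate. -/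
open Filter

/-- Third-order accuracy of the embedded companion of TR-BDF2 on the linear
test problem: with `γ = 2 − √2`, `d = γ/2`, `w = √2/4`, the embedded stability
function `R*(z) = 1 + z(b*₁ + b*₂ Rγ(z) + b*₃ R(z))` satisfies
`(R*(z) − e^z)/z³ → 0` as `z → 0`, `z ≠ 0`. -/
theorem trbdf2_embedded_third_order (γ d w b₁ b₂ b₃ : ℝ)
    (hγ : γ = 2 - Real.sqrt 2) (hd : d = γ / 2) (hw : w = Real.sqrt 2 / 4)
    (hb₁ : b₁ = (1 - w) / 3) (hb₂ : b₂ = (3 * w + 1) / 3) (hb₃ : b₃ = d / 3)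
    (Rγ R Rstar : ℂ → ℂ)
    (hRγ : ∀ z : ℂ, Rγ z = (2 + (γ : ℂ) * z) / (2 - (γ : ℂ) * z))
    (hR : ∀ z : ℂ, R z = ((1 + (1 - (γ : ℂ)) ^ 2) * z + 2 * (2 - (γ : ℂ))) /
        ((γ : ℂ) * (1 - (γ : ℂ)) * z ^ 2 + ((γ : ℂ) ^ 2 - 2) * z + 2 * (2 - (γ : ℂ))))
    (hRstar : ∀ z : ℂ, Rstar z = 1 + z * ((b₁ : ℂ) + (b₂ : ℂ) * Rγ z + (b₃ : ℂ) * R z)) :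
    Tendsto (fun z : ℂ => (Rstar z - Complex.exp z) / z ^ 3)
      (nhdsWithin 0 {0}ᶜ) (nhds 0) := by
  set c : ℂ := ((Real.sqrt 2 : ℝ) : ℂ) with hc
  have hs : c ^ 2 = 2 := by
    rw [hc, ← Complex.ofReal_pow, Real.sq_sqrt (by norm_num : (0:ℝ) ≤ 2)]
    norm_num
  have hcne : c ≠ 0 := by intro h; rw [h] at hs; norm_num at hs
  have hγc : (γ : ℂ) = 2 - c := by rw [hγ]; push_cast; ring
  have hb1c : (b₁ : ℂ) = (4 - c) / 12 := by rw [hb₁, hw]; push_cast; ring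
  have hb2c : (b₂ : ℂ) = (4 + 3 * c) / 12 := by rw [hb₂, hw]; push_cast; ring
  have hb3c : (b₃ : ℂ) = (2 - c) / 6 := by rw [hb₃, hd, hγ]; push_cast; ring
  -- abbreviations
  set D1 : ℂ → ℂ := fun z => 2 - (2 - c) * z with hD1
  set D2 : ℂ → ℂ := fun z =>
    (2 - c) * (1 - (2 - c)) * z ^ 2 + ((2 - c) ^ 2 - 2) * z + 2 * (2 - (2 - c)) with hD2
  set M : ℂ → ℂ := fun z => (8 - 5 * c) / 3 + (-3 + 2 * c) * z + ((-7 + 5 * c) / 3) * z ^ 2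
    with hM
  set P : ℂ → ℂ := fun z => 1 + z + z ^ 2 / 2 + z ^ 3 / 6 with hP
  have hD1cont : Continuous D1 := by rw [hD1]; fun_prop
  have hD2cont : Continuous D2 := by rw [hD2]; fun_prop
  have hMcont : Continuous M := by rw [hM]; fun_prop
  have hD10 : D1 0 ≠ 0 := by simp [hD1]
  have hD20 : D2 0 ≠ 0 := by
    have h0 : D2 0 = 2 * c := by rw [hD2]; ring
    rw [h0]
    exact mul_ne_zero two_ne_zero hcne
  -- eventually, denominators are nonzero
  have hev1 : ∀ᶠ z in nhdsWithin (0:ℂ) {0}ᶜ, D1 z ≠ 0 :=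
    ((hD1cont.continuousAt).eventually_ne hD10).filter_mono nhdsWithin_le_nhds
  have hev2 : ∀ᶠ z in nhdsWithin (0:ℂ) {0}ᶜ, D2 z ≠ 0 :=
    ((hD2cont.continuousAt).eventually_ne hD20).filter_mono nhdsWithin_le_nhds
  have hevz : ∀ᶠ z in nhdsWithin (0:ℂ) {0}ᶜ, z ≠ 0 := by
    filter_upwards [self_mem_nhdsWithin] with z hz using hz
  -- the key pointwise identity
  have heq : ∀ᶠ z in nhdsWithin (0:ℂ) {0}ᶜ,
      z * M z / (D1 z * D2 z) - (Complex.exp z - P z) / z ^ 3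
        = (Rstar z - Complex.exp z) / z ^ 3 := by
    filter_upwards [hev1, hev2, hevz] with z h1 h2 hz
    have hA : Rγ z * D1 z = 2 + (2 - c) * z := by
      rw [hRγ, hγc, hD1]
      field_simp
      exact mul_div_cancel_right₀ _ h1
    have h2' : (2 - c) * (1 - (2 - c)) * z ^ 2 + ((2 - c) ^ 2 - 2) * z + 2 * (2 - (2 - c)) ≠ 0 := by
      simp only [hD2] at h2; exact h2
    have hB : R z * D2 z = (1 + (1 - (2 - c)) ^ 2) * z + 2 * (2 - (2 - c)) := by
      rw [hR, hγc, hD2]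
      exact div_mul_cancel₀ _ h2'
    have hnum : (Rstar z - P z) * (D1 z * D2 z) = z ^ 4 * M z := by
      rw [hRstar z, hb1c, hb2c, hb3c, hP, hD1, hD2, hM]
      simp only
      simp only [hD1, hD2] at hA hB
      linear_combination (z * ((4 + 3 * c) / 12) *
          ((2 - c) * (1 - (2 - c)) * z ^ 2 + ((2 - c) ^ 2 - 2) * z + 2 * (2 - (2 - c)))) * hA
        + (z * ((2 - c) / 6) * (2 - (2 - c) * z)) * hB
        + (-z^3 + (5/3)*z^4 - (7/6)*z^5 - (5/6)*z^6
           + c*(-z^2 + (5/3)*z^3 - (7/6)*z^4 + (1/3)*z^5 + (1/6)*z^6)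
           + c^2*(-(1/2)*z^3 + (1/3)*z^4)) * hs
    have hdiv : Rstar z - P z = z ^ 4 * M z / (D1 z * D2 z) :=
      (eq_div_iff (mul_ne_zero h1 h2)).mpr hnum
    have hsplit : Rstar z - Complex.exp z
        = z ^ 4 * M z / (D1 z * D2 z) - (Complex.exp z - P z) := by
      rw [← hdiv]; ring
    rw [hsplit, sub_div]
    congr 1
    field_simp
  -- limit of the rational part
  have T1 : Tendsto (fun z : ℂ => z * M z / (D1 z * D2 z))
      (nhdsWithin (0:ℂ) {0}ᶜ) (nhds 0) := by
    have hca : ContinuousAt (fun z : ℂ => z * M z / (D1 z * D2 z)) 0 :=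
      ContinuousAt.div ((continuous_id.mul hMcont).continuousAt)
        ((hD1cont.mul hD2cont).continuousAt) (mul_ne_zero hD10 hD20)
    have := hca.tendsto.mono_left
      (nhdsWithin_le_nhds : nhdsWithin (0:ℂ) {0}ᶜ ≤ nhds 0)
    simpa using this
  -- limit of the exponential remainder
  have hPsum : ∀ z : ℂ, ∑ m ∈ Finset.range 4, z ^ m / (m.factorial : ℂ) = P z := by
    intro z
    rw [hP]
    simp [Finset.sum_range_succ, Nat.factorial]
    try ring
  have T2 : Tendsto (fun z : ℂ => (Complex.exp z - P z) / z ^ 3)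
      (nhdsWithin (0:ℂ) {0}ᶜ) (nhds 0) := by
    have hball : ∀ᶠ z in nhdsWithin (0:ℂ) {0}ᶜ, ‖z‖ ≤ 1 := by
      have h : ∀ᶠ z in nhds (0:ℂ), ‖z‖ ≤ 1 := by
        filter_upwards [Metric.closedBall_mem_nhds (0:ℂ) one_pos] with z hz
        simpa [Complex.dist_eq] using hz
      exact h.filter_mono nhdsWithin_le_nhds
    have hbound : ∀ᶠ z in nhdsWithin (0:ℂ) {0}ᶜ,
        ‖(Complex.exp z - P z) / z ^ 3‖ ≤ ‖z‖ * (5 / 96) := by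
      filter_upwards [hball, hevz] with z h1 hz
      have hb := Complex.exp_bound h1 (by norm_num : 0 < 4)
      rw [hPsum z] at hb
      have hzpos : 0 < ‖z‖ := norm_pos_iff.mpr hz
      have : ‖(Complex.exp z - P z) / z ^ 3‖
          = ‖(Complex.exp z - P z)‖ / ‖z‖ ^ 3 := by
        rw [norm_div, norm_pow]
      rw [this, div_le_iff₀ (by positivity)]
      calc ‖(Complex.exp z - P z)‖
          ≤ ‖z‖ ^ 4 * ((4:ℕ).succ * (((4:ℕ).factorial * (4:ℕ) : ℝ))⁻¹) := hb
        _ = ‖z‖ * (5 / 96) * ‖z‖ ^ 3 := by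
            norm_num [Nat.factorial]; ring
    have hg : Tendsto (fun z : ℂ => ‖z‖ * (5 / 96))
        (nhdsWithin (0:ℂ) {0}ᶜ) (nhds 0) := by
      have := ((continuous_norm.tendsto (0:ℂ)).mono_left
        (nhdsWithin_le_nhds : nhdsWithin (0:ℂ) {0}ᶜ ≤ nhds 0)).mul_const (5 / 96 : ℝ)
      simpa using this
    exact squeeze_zero_norm' hbound hg
  have := T1.sub T2
  rw [sub_zero] at this
  exact this.congr' heq
end

section
/- Let γ = 2 − √2, d = γ/2, w = √2/4, b*₁ = (1−w)/3, b*₂ = (3w+1)/3, b*₃ = d/3, and for real x define Rγ(x) = (2+γx)/(2−γx), R(x) = ((1+(1−γ)²)x + 2(2−γ)) / (γ(1−γ)x² + (γ²−2)x + 2(2−γ)) and R*(x) = 1 + x(b*₁ + b*₂Rγ(x) + b*₃R(x)). Then R*(x) → +∞ as x → −∞. In particular the third-order embedded companion of TR-BDF2 is not L-stable, even though TR-BDF2 itself is. -/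
set_option maxHeartbeats 1000000


open Filter Topology

/-- The third-order embedded companion of TR-BDF2 is not L-stable: its real
stability function `R*(x) = 1 + x(b*₁ + b*₂ Rγ(x) + b*₃ R(x))` tends to `+∞`
as `x → −∞`. -/
theorem trbdf2_embedded_not_L_stable (γ d w b₁ b₂ b₃ : ℝ)
    (hγ : γ = 2 - Real.sqrt 2) (hd : d = γ / 2) (hw : w = Real.sqrt 2 / 4)
    (hb₁ : b₁ = (1 - w) / 3) (hb₂ : b₂ = (3 * w + 1) / 3) (hb₃ : b₃ = d / 3)
    (Rγ R Rstar : ℝ → ℝ)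
    (hRγ : ∀ x : ℝ, Rγ x = (2 + γ * x) / (2 - γ * x))
    (hR : ∀ x : ℝ, R x = ((1 + (1 - γ) ^ 2) * x + 2 * (2 - γ)) /
        (γ * (1 - γ) * x ^ 2 + (γ ^ 2 - 2) * x + 2 * (2 - γ)))
    (hRstar : ∀ x : ℝ, Rstar x = 1 + x * (b₁ + b₂ * Rγ x + b₃ * R x)) :
    Tendsto Rstar atBot atTop := by
  have h2 : Real.sqrt 2 ^ 2 = 2 := Real.sq_sqrt (by norm_num)
  have hpos : 0 < Real.sqrt 2 := Real.sqrt_pos.2 (by norm_num)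
  have hs_lt : Real.sqrt 2 < 2 := by nlinarith
  have hs_gt : 1 < Real.sqrt 2 := by nlinarith
  have hγpos : 0 < γ := by rw [hγ]; linarith
  have hγlt : γ < 1 := by rw [hγ]; linarith
  have hC : 0 < γ * (1 - γ) := mul_pos hγpos (by linarith)
  have hD : γ ^ 2 - 2 < 0 := by nlinarith
  have hcoef : b₁ - b₂ < 0 := by
    rw [hb₁, hb₂, hw]; linarith
  set A : ℝ := 1 + (1 - γ)^2 with hA
  set B : ℝ := 2 * (2 - γ) with hB
  -- eventual equality
  have hev : ∀ᶠ x in atBot, Rstar x =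
      (b₁ - b₂) * x + (1 + b₂ * (4 / (2 / x - γ)) +
        b₃ * ((A + B / x) / (γ * (1 - γ) + (γ ^ 2 - 2) / x + B / x ^ 2))) := by
    filter_upwards [eventually_lt_atBot (0 : ℝ)] with x hx
    have hx0 : x ≠ 0 := ne_of_lt hx
    have hden1 : (0:ℝ) < 2 - γ * x := by nlinarith
    have hden2 : 2 / x - γ < 0 := by
      have : 2 / x < 0 := div_neg_of_pos_of_neg (by norm_num) hx
      linarith
    have hden3 : 0 < γ * (1 - γ) * x ^ 2 + (γ ^ 2 - 2) * x + B := by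
      have h1 : 0 < γ * (1 - γ) * x ^ 2 := mul_pos hC (by positivity)
      have h2' : 0 < (γ ^ 2 - 2) * x := mul_pos_of_neg_of_neg hD hx
      have h3 : 0 < B := by rw [hB]; linarith
      linarith
    have hden4 : γ * (1 - γ) + (γ ^ 2 - 2) / x + B / x ^ 2 ≠ 0 := by
      have heq : γ * (1 - γ) + (γ ^ 2 - 2) / x + B / x ^ 2 =
          (γ * (1 - γ) * x ^ 2 + (γ ^ 2 - 2) * x + B) / x ^ 2 := by
        field_simp
      rw [heq]
      exact ne_of_gt (div_pos hden3 (by positivity))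
    have hq1 : x * Rγ x = -x + 4 / (2 / x - γ) := by
      rw [hRγ, show 2 / x - γ = (2 - γ * x) / x by field_simp,
        div_div_eq_mul_div]
      field_simp [show (2:ℝ) - x * γ ≠ 0 by nlinarith]
      ring
    have hq2 : x * R x = (A + B / x) /
        (γ * (1 - γ) + (γ ^ 2 - 2) / x + B / x ^ 2) := by
      rw [hR, show γ * (1 - γ) + (γ ^ 2 - 2) / x + B / x ^ 2 =
          (γ * (1 - γ) * x ^ 2 + (γ ^ 2 - 2) * x + B) / x ^ 2 by field_simp,
        show A + B / x = (A * x + B) / x by field_simp,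
        div_div_div_comm]
      rw [div_div_eq_mul_div, div_mul_eq_mul_div, div_div]
      rw [eq_div_iff (mul_ne_zero hden3.ne' hx0)]
      field_simp [hden3.ne']
      rw [mul_div_assoc, div_self (ne_of_gt (by linarith [hden3, show x * (x * γ * (1 - γ) + (γ ^ 2 - 2)) + B = γ * (1 - γ) * x ^ 2 + (γ ^ 2 - 2) * x + B by ring])), mul_one]
    rw [hRstar]
    rw [show x * (b₁ + b₂ * Rγ x + b₃ * R x) =
      b₁ * x + b₂ * (x * Rγ x) + b₃ * (x * R x) by ring, hq1, hq2]
    ring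
  -- limits
  have hinv : Tendsto (fun x : ℝ => x⁻¹) atBot (𝓝 0) := by
    have h1 := (tendsto_neg_atBot_atTop : Tendsto (fun x:ℝ => -x) atBot atTop).inv_tendsto_atTop
    have h2 := h1.neg
    simp only [neg_neg, neg_zero] at h2
    exact h2.congr (fun x => by simp [inv_neg])
  have hdiv : ∀ c : ℝ, Tendsto (fun x : ℝ => c / x) atBot (𝓝 0) := by
    intro c
    simpa using hinv.const_mul c |>.congr (fun x => by rw [div_eq_mul_inv])
  have hdiv2 : Tendsto (fun x : ℝ => B / x ^ 2) atBot (𝓝 0) := by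
    have := (hdiv B).mul (hdiv 1)
    simpa using this.congr (fun x => by rw [div_mul_div_comm, mul_one, ← sq])
  have t1 : Tendsto (fun x : ℝ => 4 / (2 / x - γ)) atBot (𝓝 (4 / (0 - γ))) :=
    tendsto_const_nhds.div ((hdiv 2).sub_const γ) (by simp only [zero_sub, ne_eq, neg_eq_zero]; exact hγpos.ne')
  have t2 : Tendsto (fun x : ℝ => (A + B / x) /
      (γ * (1 - γ) + (γ ^ 2 - 2) / x + B / x ^ 2)) atBot
      (𝓝 ((A + 0) / (γ * (1 - γ) + 0 + 0))) := by
    exact (tendsto_const_nhds.add (hdiv B)).div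
      ((tendsto_const_nhds.add (hdiv (γ ^ 2 - 2))).add hdiv2)
      (by simpa only [add_zero] using hC.ne')
  have hmain : Tendsto (fun x : ℝ => (b₁ - b₂) * x) atBot atTop :=
    Tendsto.const_mul_atBot_of_neg hcoef tendsto_id
  have hg : Tendsto (fun x : ℝ => 1 + b₂ * (4 / (2 / x - γ)) +
      b₃ * ((A + B / x) / (γ * (1 - γ) + (γ ^ 2 - 2) / x + B / x ^ 2))) atBot
      (𝓝 (1 + b₂ * (4 / (0 - γ)) + b₃ * ((A + 0) / (γ * (1 - γ) + 0 + 0)))) :=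
    (tendsto_const_nhds.add (t1.const_mul b₂)).add (t2.const_mul b₃)
  exact Tendsto.congr' (hev.mono fun x h => h.symm) (hmain.atTop_add hg)
end

section
/- Let m ≥ 1, h > 0, γ ∈ (0,1), and let uₙ, u_{n+γ}, u_{n+1}, zₙ, z_{n+γ}, z_{n+1} ∈ ℝᵐ. Let p be the cubic with coefficients α₀ = uₙ, α₁ = γzₙ, α₂ = u_{n+γ} − uₙ − γzₙ, α₃ = γ(z_{n+γ} − zₙ) in the variable β = ζ/(γh), and let q be the cubic with coefficients α₀ = u_{n+γ}, α₁ = (1−γ)z_{n+γ}, α₂ = u_{n+1} − u_{n+γ} − α₁, α₃ = (1−γ)(z_{n+1} − z_{n+γ}) in the variable β = (ζ−γh)/((1−γ)h), each of the form (α₃−2α₂)β³ + (3α₂−α₃)β² + α₁β + α₀. Define Q : [0,h] → ℝᵐ by Q(ζ) = p(ζ) for ζ ∈ [0, γh] and Q(ζ) = q(ζ) for ζ ∈ [γh, h]. Then Q is well defined (p(γh) = q(γh)) and continuously differentiable on [0,h]: there is a continuous function g on [0,h] with g = p' on [0,γh] and g = q' on [γh,h] such that Q has derivative g(ζ) at every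 ζ ∈ [0,h] (one-sided at the endpoints). Thus the TR-BDF2 dense-output interpolant yields globally C¹ trajectories. -/
/-- The piecewise-cubic TR-BDF2 dense-output interpolant is well defined and
globally `C¹` on `[0, h]`: the two Hermite cubics match at `ζ = γh` and there is
a continuous function `g`, equal to `p'` on `[0, γh]` and to `q'` on `[γh, h]`,
which is the derivative of the interpolant at every point of `[0, h]`. -/
theorem trbdf2_dense_output_C1 (m : ℕ) (hm : 1 ≤ m) (h γ : ℝ)
    (hh : 0 < h) (hγ : γ ∈ Set.Ioo (0 : ℝ) 1)
    (un ug u1 zn zg z1 : Fin m → ℝ)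
    (p q : ℝ → Fin m → ℝ)
    (hp : ∀ ζ : ℝ, p ζ = (ζ / (γ * h)) ^ 3 • (γ • (zg - zn) - (2 : ℝ) • (ug - un - γ • zn))
        + (ζ / (γ * h)) ^ 2 • ((3 : ℝ) • (ug - un - γ • zn) - γ • (zg - zn))
        + (ζ / (γ * h)) • (γ • zn) + un)
    (hq : ∀ ζ : ℝ, q ζ = ((ζ - γ * h) / ((1 - γ) * h)) ^ 3 •
          ((1 - γ) • (z1 - zg) - (2 : ℝ) • (u1 - ug - (1 - γ) • zg))
        + ((ζ - γ * h) / ((1 - γ) * h)) ^ 2 •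
          ((3 : ℝ) • (u1 - ug - (1 - γ) • zg) - (1 - γ) • (z1 - zg))
        + ((ζ - γ * h) / ((1 - γ) * h)) • ((1 - γ) • zg) + ug)
    (Q : ℝ → Fin m → ℝ)
    (hQ : ∀ ζ : ℝ, Q ζ = if ζ ≤ γ * h then p ζ else q ζ) :
    p (γ * h) = q (γ * h) ∧
      ∃ g : ℝ → Fin m → ℝ, ContinuousOn g (Set.Icc 0 h) ∧
        (∀ ζ ∈ Set.Icc 0 (γ * h), g ζ = deriv p ζ) ∧
        (∀ ζ ∈ Set.Icc (γ * h) h, g ζ = deriv q ζ) ∧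
        ∀ ζ ∈ Set.Icc 0 h, HasDerivWithinAt Q (g ζ) (Set.Icc 0 h) ζ := by
  obtain ⟨hγ0, hγ1⟩ := hγ
  have hcpos : 0 < γ * h := mul_pos hγ0 hh
  have hc'pos : 0 < (1 - γ) * h := mul_pos (by linarith) hh
  have hcne : γ * h ≠ 0 := ne_of_gt hcpos
  have hc'ne : (1 - γ) * h ≠ 0 := ne_of_gt hc'pos
  set A : Fin m → ℝ := γ • (zg - zn) - (2 : ℝ) • (ug - un - γ • zn) with hA
  set B : Fin m → ℝ := (3 : ℝ) • (ug - un - γ • zn) - γ • (zg - zn) with hB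
  set C : Fin m → ℝ := γ • zn with hC
  set A' : Fin m → ℝ := (1 - γ) • (z1 - zg) - (2 : ℝ) • (u1 - ug - (1 - γ) • zg) with hA'
  set B' : Fin m → ℝ := (3 : ℝ) • (u1 - ug - (1 - γ) • zg) - (1 - γ) • (z1 - zg) with hB'
  set C' : Fin m → ℝ := (1 - γ) • zg with hC'
  set P' : ℝ → Fin m → ℝ := fun ζ =>
    ((3 : ℝ) * (ζ / (γ * h)) ^ 2 * (1 / (γ * h))) • A
      + ((2 : ℝ) * (ζ / (γ * h)) ^ 1 * (1 / (γ * h))) • B + (1 / (γ * h)) • C with hP'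
  set Q' : ℝ → Fin m → ℝ := fun ζ =>
    ((3 : ℝ) * ((ζ - γ * h) / ((1 - γ) * h)) ^ 2 * (1 / ((1 - γ) * h))) • A'
      + ((2 : ℝ) * ((ζ - γ * h) / ((1 - γ) * h)) ^ 1 * (1 / ((1 - γ) * h))) • B'
      + (1 / ((1 - γ) * h)) • C' with hQ'
  -- derivative of p
  have hderp : ∀ ζ : ℝ, HasDerivAt p (P' ζ) ζ := by
    intro ζ
    have hpe : p = fun t : ℝ => (t / (γ * h)) ^ 3 • A + (t / (γ * h)) ^ 2 • B
        + (t / (γ * h)) • C + un := funext hp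
    rw [hpe]
    have h1 : HasDerivAt (fun t : ℝ => t / (γ * h)) (1 / (γ * h)) ζ := by
      simpa using (hasDerivAt_id ζ).div_const (γ * h)
    have h3 : HasDerivAt (fun t : ℝ => (t / (γ * h)) ^ 3)
        ((3 : ℝ) * (ζ / (γ * h)) ^ 2 * (1 / (γ * h))) ζ := by
      have := h1.pow 3
      norm_num at this
      refine this.congr_deriv ?_
      rw [one_div, mul_inv]
      ring
    have h2 : HasDerivAt (fun t : ℝ => (t / (γ * h)) ^ 2)
        ((2 : ℝ) * (ζ / (γ * h)) ^ 1 * (1 / (γ * h))) ζ := by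
      have := h1.pow 2
      norm_num at this
      refine this.congr_deriv ?_
      rw [one_div, mul_inv]
      ring
    exact (((h3.smul_const A).add (h2.smul_const B)).add (h1.smul_const C)).add_const un
  -- derivative of q
  have hderq : ∀ ζ : ℝ, HasDerivAt q (Q' ζ) ζ := by
    intro ζ
    have hqe : q = fun t : ℝ => ((t - γ * h) / ((1 - γ) * h)) ^ 3 • A'
        + ((t - γ * h) / ((1 - γ) * h)) ^ 2 • B'
        + ((t - γ * h) / ((1 - γ) * h)) • C' + ug := funext hq
    rw [hqe]
    have h1 : HasDerivAt (fun t : ℝ => (t - γ * h) / ((1 - γ) * h)) (1 / ((1 - γ) * h)) ζ := by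
      simpa using ((hasDerivAt_id ζ).sub_const (γ * h)).div_const ((1 - γ) * h)
    have h3 : HasDerivAt (fun t : ℝ => ((t - γ * h) / ((1 - γ) * h)) ^ 3)
        ((3 : ℝ) * ((ζ - γ * h) / ((1 - γ) * h)) ^ 2 * (1 / ((1 - γ) * h))) ζ := by
      have := h1.pow 3
      norm_num at this
      refine this.congr_deriv ?_
      rw [one_div, mul_inv]
      ring
    have h2 : HasDerivAt (fun t : ℝ => ((t - γ * h) / ((1 - γ) * h)) ^ 2)
        ((2 : ℝ) * ((ζ - γ * h) / ((1 - γ) * h)) ^ 1 * (1 / ((1 - γ) * h))) ζ := by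
      have := h1.pow 2
      norm_num at this
      refine this.congr_deriv ?_
      rw [one_div, mul_inv]
      ring
    exact (((h3.smul_const A').add (h2.smul_const B')).add (h1.smul_const C')).add_const ug
  -- matching of values
  have hmatch : p (γ * h) = q (γ * h) := by
    rw [hp, hq]
    rw [div_self hcne, sub_self, zero_div]
    simp only [one_pow, one_smul, zero_pow, zero_smul, ne_eq, OfNat.ofNat_ne_zero,
      not_false_eq_true, zero_add]
    rw [hA, hB, hC]
    module
  -- matching of derivatives
  have hdmatch : P' (γ * h) = Q' (γ * h) := by
    have e1 : P' (γ * h) = (1 / h) • zg := by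
      rw [hP']
      simp only
      rw [div_self hcne]
      funext i
      simp only [hA, hB, hC, Pi.add_apply, Pi.smul_apply, Pi.sub_apply, smul_eq_mul]
      field_simp
      ring
    have e2 : Q' (γ * h) = (1 / h) • zg := by
      rw [hQ']
      simp only
      rw [sub_self, zero_div]
      funext i
      simp only [hA', hB', hC', Pi.add_apply, Pi.smul_apply, Pi.sub_apply, smul_eq_mul]
      field_simp
      ring
    rw [e1, e2]
  -- the glued derivative
  refine ⟨hmatch, fun ζ => if ζ ≤ γ * h then P' ζ else Q' ζ, ?_, ?_, ?_, ?_⟩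
  · have hPc : Continuous P' := by rw [hP']; fun_prop
    have hQc : Continuous Q' := by rw [hQ']; fun_prop
    exact (Continuous.if_le hPc hQc continuous_id continuous_const
      (fun x hx => by have hx' : x = γ * h := hx; subst hx'; exact hdmatch)).continuousOn
  · intro ζ hζ
    beta_reduce
    rw [if_pos hζ.2, (hderp ζ).deriv]
  · intro ζ hζ
    beta_reduce
    rcases eq_or_lt_of_le hζ.1 with hlt | hlt
    · rw [if_pos hlt.ge, ← hlt, (hderq (γ * h)).deriv, hdmatch]
    · rw [if_neg (not_le.2 hlt), (hderq ζ).deriv]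
  · intro ζ hζ
    beta_reduce
    rcases lt_trichotomy ζ (γ * h) with hlt | heq | hgt
    · rw [if_pos hlt.le]
      refine ((hderp ζ).congr_of_eventuallyEq ?_).hasDerivWithinAt
      filter_upwards [Iio_mem_nhds hlt] with x hx
      rw [hQ x, if_pos (le_of_lt hx)]
    · rw [if_pos heq.le, heq]
      have hleft : HasDerivWithinAt Q (P' (γ * h)) (Set.Iic (γ * h)) (γ * h) :=
        (hderp (γ * h)).hasDerivWithinAt.congr
          (fun x hx => by rw [hQ x, if_pos (Set.mem_Iic.mp hx)]) (by rw [hQ, if_pos le_rfl])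
      have hright : HasDerivWithinAt Q (P' (γ * h)) (Set.Ici (γ * h)) (γ * h) := by
        rw [hdmatch]
        refine (hderq (γ * h)).hasDerivWithinAt.congr (fun x hx => ?_)
          (by rw [hQ, if_pos le_rfl]; exact hmatch)
        rcases eq_or_lt_of_le (Set.mem_Ici.mp hx) with hx' | hx'
        · rw [hQ x, ← hx', if_pos le_rfl]; exact hmatch
        · rw [hQ x, if_neg (not_le.2 hx')]
      have := hleft.union hright
      rw [Set.Iic_union_Ici, hasDerivWithinAt_univ] at this
      exact this.hasDerivWithinAt
    · rw [if_neg (not_le.2 hgt)]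
      refine ((hderq ζ).congr_of_eventuallyEq ?_).hasDerivWithinAt
      filter_upwards [Ioi_mem_nhds hgt] with x hx
      rw [hQ x, if_neg (not_le.2 hx)]
end

section
/- Let p, q ≥ 1 and m = p + q. Let E be a real m×p matrix, E⊥ a real m×q matrix, P a real p×m matrix and P⊥ a real q×m matrix satisfying P·E = I_p, P⊥·E⊥ = I_q and E·P + E⊥·P⊥ = I_m. Let D, N, Q, R be real m×m matrices and assume P·D·E is invertible. Suppose u, u¹, u², v ∈ ℝᵐ satisfy: (i) P·D·(E·P·u¹ + E⊥·P⊥·Q·u) = P·N·u; (ii) P·D·(E·P·u² + E⊥·P⊥·R·u) = P·N·(E·P·u¹ + E⊥·P⊥·Q·u); (iii) v = E·P·u² + E⊥·P⊥·R·u. Then v = R_mr·u, where, writing S = (P·D·E)⁻¹, R_mr = E·[ S·(P·N·E)·S·(P·N − (P·D·E⊥)·P⊥·Q) + S·(P·N·E⊥)·P⊥·Q − S·(P·D·E⊥)·P⊥·R ] + E⊥·P⊥·R. Thus the multirate step with one halving of the time step is a linear map with the explicit stability matrix R_mr. -/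
open Matrix

/-- The stability matrix of the self-adjusting multirate method with one
halving of the time step: the multirate step `uⁿ ↦ u^{n+1}` is the linear map
given by the explicit matrix `R_mr`. -/
theorem multirate_stability_matrix (p q : ℕ) (hp : 1 ≤ p) (hq : 1 ≤ q)
    (E : Matrix (Fin (p + q)) (Fin p) ℝ) (E' : Matrix (Fin (p + q)) (Fin q) ℝ)
    (P : Matrix (Fin p) (Fin (p + q)) ℝ) (P' : Matrix (Fin q) (Fin (p + q)) ℝ)
    (hPE : P * E = 1) (hP'E' : P' * E' = 1) (hEP : E * P + E' * P' = 1)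
    (D N Q R : Matrix (Fin (p + q)) (Fin (p + q)) ℝ)
    (hinv : IsUnit (P * D * E))
    (u u₁ u₂ v : Fin (p + q) → ℝ)
    (hstep1 : (P * D) *ᵥ ((E * P) *ᵥ u₁ + (E' * P' * Q) *ᵥ u) = (P * N) *ᵥ u)
    (hstep2 : (P * D) *ᵥ ((E * P) *ᵥ u₂ + (E' * P' * R) *ᵥ u)
        = (P * N) *ᵥ ((E * P) *ᵥ u₁ + (E' * P' * Q) *ᵥ u))
    (hv : v = (E * P) *ᵥ u₂ + (E' * P' * R) *ᵥ u) :
    v = (E * ((P * D * E)⁻¹ * (P * N * E) * (P * D * E)⁻¹ * (P * N - (P * D * E') * P' * Q)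
          + (P * D * E)⁻¹ * (P * N * E') * P' * Q
          - (P * D * E)⁻¹ * (P * D * E') * P' * R)
        + E' * P' * R) *ᵥ u := by
  set S := (P * D * E)⁻¹ with hS
  have hdet : IsUnit (P * D * E).det := (Matrix.isUnit_iff_isUnit_det _).mp hinv
  have hSinv : S * (P * D * E) = 1 := Matrix.nonsing_inv_mul _ hdet
  -- first microstep
  have h1 : (P * D * E) *ᵥ (P *ᵥ u₁)
      = (P * N) *ᵥ u - (P * D * (E' * P' * Q)) *ᵥ u := by
    rw [eq_sub_iff_add_eq, ← hstep1]
    simp [Matrix.mulVec_add, Matrix.mulVec_mulVec, Matrix.mul_assoc]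
  have hu1 : P *ᵥ u₁ = S *ᵥ ((P * N) *ᵥ u - (P * D * (E' * P' * Q)) *ᵥ u) := by
    rw [← h1, Matrix.mulVec_mulVec, hSinv, Matrix.one_mulVec]
  -- second microstep
  have h2 : (P * D * E) *ᵥ (P *ᵥ u₂)
      = (P * N * E) *ᵥ (P *ᵥ u₁) + (P * N * (E' * P' * Q)) *ᵥ u
        - (P * D * (E' * P' * R)) *ᵥ u := by
    rw [eq_sub_iff_add_eq]
    calc (P * D * E) *ᵥ (P *ᵥ u₂) + (P * D * (E' * P' * R)) *ᵥ u
        = (P * D) *ᵥ ((E * P) *ᵥ u₂ + (E' * P' * R) *ᵥ u) := by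
          simp [Matrix.mulVec_add, Matrix.mulVec_mulVec, Matrix.mul_assoc]
      _ = (P * N) *ᵥ ((E * P) *ᵥ u₁ + (E' * P' * Q) *ᵥ u) := hstep2
      _ = (P * N * E) *ᵥ (P *ᵥ u₁) + (P * N * (E' * P' * Q)) *ᵥ u := by
          simp [Matrix.mulVec_add, Matrix.mulVec_mulVec, Matrix.mul_assoc]
  have hu2 : P *ᵥ u₂ = S *ᵥ ((P * N * E) *ᵥ (P *ᵥ u₁) + (P * N * (E' * P' * Q)) *ᵥ u
        - (P * D * (E' * P' * R)) *ᵥ u) := by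
    rw [← h2, Matrix.mulVec_mulVec, hSinv, Matrix.one_mulVec]
  rw [hv]
  have : (E * P) *ᵥ u₂ = E *ᵥ (P *ᵥ u₂) := by simp [Matrix.mulVec_mulVec]
  rw [this, hu2, hu1]
  simp only [Matrix.mulVec_add, Matrix.mulVec_sub, Matrix.mulVec_mulVec,
    Matrix.add_mul, Matrix.sub_mul, Matrix.mul_add, Matrix.mul_sub,
    Matrix.add_mulVec, Matrix.sub_mulVec, Matrix.mul_assoc]
end
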